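/- If a pinwheel instance A is unschedulable, then fold_θ(A) is unschedulable; equivalently, if fold_θ(A) is schedulable then A is schedulable. -/

import Mathlib

/-- `FoldRel θ A B` holds when `B` is a possible result of running the fold
procedure on `A`: while `max A > θ`, let `a` and `b` be the largest and second
largest values in `A`; delete `a`; if `b > θ`, replace `b` by `b / 2`; otherwise
insert `θ`. -/
inductive FoldRel (θ : ℝ) : Multiset ℝ → Multiset ℝ → Prop
  | done (A : Multiset ℝ) (h : ∀ x ∈ A, x ≤ θ) : FoldRel θ A A
  | half (A C : Multiset ℝ) (a b : ℝ)
      (haA : a ∈ A) (hamax : ∀ x ∈ A, x ≤ a)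
      (hbA : b ∈ A.erase a) (hbmax : ∀ x ∈ A.erase a, x ≤ b)
      (hagt : θ < a) (hbgt : θ < b)
      (hrec : FoldRel θ (b / 2 ::ₘ (A.erase a).erase b) C) : FoldRel θ A C
  | cap (A C : Multiset ℝ) (a b : ℝ)
      (haA : a ∈ A) (hamax : ∀ x ∈ A, x ≤ a)
      (hbA : b ∈ A.erase a) (hbmax : ∀ x ∈ A.erase a, x ≤ b)
      (hagt : θ < a) (hble : b ≤ θ)
      (hrec : FoldRel θ (θ ::ₘ A.erase a) C) : FoldRel θ A C

/-- Density of a multiset of (real) periods: sum of reciprocals. -/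
noncomputable def densityM (A : Multiset ℝ) : ℝ := (A.map fun x => 1 / x).sum

/-- A schedule for a list of real periods is valid if each job with period `r`
is scheduled at least `⌊L / r⌋` times in every window of `L` consecutive days. -/
def ValidR (l : List ℝ) (f : ℕ → Fin l.length) : Prop :=
  ∀ (i : Fin l.length) (t L : ℕ),
    ⌊(L : ℝ) / l.get i⌋ ≤ (((Finset.Ico t (t + L)).filter fun s => f s = i).card : ℤ)

/-- A multiset of real periods is schedulable if some enumeration of it admits a
valid schedule. -/
def SchedulableR (A : Multiset ℝ) : Prop :=
  ∃ l : List ℝ, (l : Multiset ℝ) = A ∧ ∃ f, ValidR l f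



open Finset

lemma evens_lower (m k : ℕ) :
    k / 2 ≤ ((Finset.Ico m (m + k)).filter (fun x => Even x)).card := by
  classical
  have h := Finset.card_le_card_of_injOn (fun j => m + 2 * j + m % 2)
    (s := Finset.range (k / 2))
    (t := (Finset.Ico m (m + k)).filter (fun x => Even x))
    (by
      intro j hj
      simp only [Finset.mem_coe, Finset.mem_range] at hj
      simp only [Finset.mem_coe, Finset.mem_filter, Finset.mem_Ico, Nat.even_iff]
      omega)
    (by intro a _ b _ hab; simp only at hab; omega)
  simpa using h

lemma odds_lower (m k : ℕ) :
    k / 2 ≤ ((Finset.Ico m (m + k)).filter (fun x => ¬ Even x)).card := by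
  classical
  have h := Finset.card_le_card_of_injOn (fun j => m + 2 * j + (1 - m % 2))
    (s := Finset.range (k / 2))
    (t := (Finset.Ico m (m + k)).filter (fun x => ¬ Even x))
    (by
      intro j hj
      simp only [Finset.mem_coe, Finset.mem_range] at hj
      simp only [Finset.mem_coe, Finset.mem_filter, Finset.mem_Ico, Nat.even_iff]
      omega)
    (by intro a _ b _ hab; simp only at hab; omega)
  simpa using h
open Finset

lemma occ_parity {α : Type*} [DecidableEq α] (f : ℕ → α) (i : α) (t L : ℕ) :
    ((((Finset.Ico t (t + L)).filter (fun s => f s = i)).filter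
        (fun s => Even (((Finset.range s).filter (fun u => f u = i)).card))).card
      ≥ ((Finset.Ico t (t + L)).filter (fun s => f s = i)).card / 2)
    ∧ ((((Finset.Ico t (t + L)).filter (fun s => f s = i)).filter
        (fun s => ¬ Even (((Finset.range s).filter (fun u => f u = i)).card))).card
      ≥ ((Finset.Ico t (t + L)).filter (fun s => f s = i)).card / 2) := by
  classical
  set N : ℕ → ℕ := fun u => ((Finset.range u).filter (fun s => f s = i)).card with hN
  set S := (Finset.Ico t (t + L)).filter (fun s => f s = i) with hS
  have hmono : ∀ u v, u ≤ v → N u ≤ N v := by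
    intro u v huv
    exact Finset.card_le_card (Finset.filter_subset_filter _ (Finset.range_subset_range.mpr huv))
  have hstep : ∀ s, f s = i → N (s + 1) = N s + 1 := by
    intro s hs
    simp only [hN, Finset.range_add_one, Finset.filter_insert, if_pos hs]
    rw [Finset.card_insert_of_notMem (by simp)]
  have hSsub : S ⊆ Finset.Ico t (t + L) := Finset.filter_subset _ _
  have hcardS : N (t + L) = N t + S.card := by
    have hsplit : Finset.range (t + L) = Finset.range t ∪ Finset.Ico t (t + L) := by
      rw [Finset.range_eq_Ico, Finset.range_eq_Ico]
      exact (Finset.Ico_union_Ico_eq_Ico (Nat.zero_le t) (Nat.le_add_right t L)).symm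
    simp only [hN, hS, hsplit, Finset.filter_union]
    rw [Finset.card_union_of_disjoint]
    exact Finset.disjoint_filter_filter (by
      rw [Finset.range_eq_Ico]; exact Finset.Ico_disjoint_Ico_consecutive 0 t (t + L))
  have key : ∀ u v, u ∈ S → v ∈ S → u < v → N u < N v := by
    intro u v hu hv hlt
    have h1 : N (u + 1) ≤ N v := hmono _ _ hlt
    have h2 := hstep u (Finset.mem_filter.mp hu).2
    omega
  have hinj : Set.InjOn N S := by
    intro u hu v hv huv
    rcases lt_trichotomy u v with h | h | h
    · exact absurd huv (by have := key u v (by simpa using hu) (by simpa using hv) h; omega)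
    · exact h
    · exact absurd huv (by have := key v u (by simpa using hv) (by simpa using hu) h; omega)
  have himsub : S.image N ⊆ Finset.Ico (N t) (N (t + L)) := by
    intro m hm
    obtain ⟨s, hs, rfl⟩ := Finset.mem_image.mp hm
    have hsI := Finset.mem_Ico.mp (hSsub hs)
    refine Finset.mem_Ico.mpr ⟨hmono _ _ hsI.1, ?_⟩
    have h1 : N (s + 1) ≤ N (t + L) := hmono _ _ (by omega)
    have h2 := hstep s (Finset.mem_filter.mp hs).2
    omega
  have himcard : (S.image N).card = S.card := Finset.card_image_of_injOn hinj
  have him : S.image N = Finset.Ico (N t) (N (t + L)) := by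
    apply Finset.eq_of_subset_of_card_le himsub
    rw [Nat.card_Ico, himcard]
    omega
  have hkey : ∀ (p : ℕ → Prop) (_ : DecidablePred p),
      (S.filter (fun s => p (N s))).card = ((Finset.Ico (N t) (N t + S.card)).filter p).card := by
    intro p _
    have h1 : (S.filter (fun s => p (N s))).image N = (S.image N).filter p :=
      (Finset.filter_image).symm
    rw [← hcardS, ← him, ← h1,
      Finset.card_image_of_injOn (hinj.mono (Finset.filter_subset _ _))]
  constructor
  · rw [hkey (fun x => Even x) inferInstance]
    exact evens_lower (N t) S.card
  · rw [hkey (fun x => ¬ Even x) inferInstance]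
    exact odds_lower (N t) S.card


lemma getElem_mid (l₁ r : List ℝ) (x : ℝ) (h : l₁.length < (l₁ ++ x :: r).length) :
    (l₁ ++ x :: r)[l₁.length] = x := by
  rw [List.getElem_append_right (le_refl _)]
  simp

lemma getElem_mid_right (l₁ r : List ℝ) (x : ℝ) (k : ℕ)
    (h : l₁.length + 1 + k < (l₁ ++ x :: r).length) (hk : k < r.length) :
    (l₁ ++ x :: r)[l₁.length + 1 + k] = r[k] := by
  rw [List.getElem_append_right (by omega)]
  have : l₁.length + 1 + k - l₁.length = k + 1 := by omega
  simp only [this]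
  simp

lemma getElem_swap (l₁ l₂ : List ℝ) (x y : ℝ) (i : ℕ)
    (hi : i < (l₁ ++ x :: l₂).length) (hi' : i < (l₁ ++ y :: l₂).length)
    (hne : i ≠ l₁.length) :
    (l₁ ++ x :: l₂)[i] = (l₁ ++ y :: l₂)[i] := by
  rcases Nat.lt_or_ge i l₁.length with h | h
  · rw [List.getElem_append_left h, List.getElem_append_left h]
  · obtain ⟨k, rfl⟩ : ∃ k, i = l₁.length + 1 + k := ⟨i - l₁.length - 1, by omega⟩
    have hk : k < l₂.length := by simp at hi; omega
    rw [getElem_mid_right _ _ _ _ hi hk, getElem_mid_right _ _ _ _ hi' hk]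

lemma sched_mono {c a : ℝ} (hc : 0 < c) (hca : c ≤ a) (M : Multiset ℝ)
    (h : SchedulableR (c ::ₘ M)) : SchedulableR (a ::ₘ M) := by
  obtain ⟨l, hl, f, hf⟩ := h
  have hcl : c ∈ l := by rw [← Multiset.mem_coe, hl]; exact Multiset.mem_cons_self _ _
  obtain ⟨l₁, l₂, rfl⟩ := List.append_of_mem hcl
  have hco : ((l₁ ++ c :: l₂ : List ℝ) : Multiset ℝ) = c ::ₘ ↑(l₁ ++ l₂) := by
    simpa using Multiset.coe_eq_coe.mpr (List.perm_middle (a := c) (l₁ := l₁) (l₂ := l₂))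
  have hM : M = ↑(l₁ ++ l₂) := by
    rw [hco] at hl
    exact ((Multiset.cons_inj_right c).mp hl.symm)
  refine ⟨l₁ ++ a :: l₂, ?_, ?_⟩
  · rw [hM]
    simpa using Multiset.coe_eq_coe.mpr (List.perm_middle (a := a) (l₁ := l₁) (l₂ := l₂))
  · have he : (l₁ ++ c :: l₂).length = (l₁ ++ a :: l₂).length := by simp
    refine ⟨fun s => Fin.cast he (f s), ?_⟩
    intro j t L
    have hj' : j.val < (l₁ ++ c :: l₂).length := by omega
    set j' : Fin (l₁ ++ c :: l₂).length := ⟨j.val, hj'⟩ with hj'def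
    have hfilt : (Finset.Ico t (t + L)).filter (fun s => Fin.cast he (f s) = j)
        = (Finset.Ico t (t + L)).filter (fun s => f s = j') := by
      apply Finset.filter_congr
      intro s _
      constructor
      · intro hh; apply Fin.ext; have := congrArg Fin.val hh; simpa using this
      · intro hh; apply Fin.ext; have := congrArg Fin.val hh; simpa using this
    rw [hfilt]
    have hbase := hf j' t L
    rcases eq_or_ne j.val l₁.length with hcase | hcase
    · have hg1 : (l₁ ++ a :: l₂).get j = a := by
        simp only [List.get_eq_getElem, hcase]
        exact getElem_mid _ _ _ (by omega)
      have hg2 : (l₁ ++ c :: l₂).get j' = c := by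
        simp only [List.get_eq_getElem, hj'def, hcase]
        exact getElem_mid _ _ _ (by omega)
      rw [hg1]; rw [hg2] at hbase
      refine le_trans (Int.floor_le_floor ?_) hbase
      exact div_le_div_of_nonneg_left (by positivity) hc hca
    · have hg : (l₁ ++ a :: l₂).get j = (l₁ ++ c :: l₂).get j' := by
        simp only [List.get_eq_getElem, hj'def]
        exact (getElem_swap l₁ l₂ c a j.val hj' j.isLt hcase).symm
      rw [hg]
      exact hbase

lemma getElem_swap_mid (l₁ l₂ : List ℝ) (x y : ℝ) (r : List ℝ) (i : ℕ)
    (hi : i < (l₁ ++ x :: l₂).length) (hi' : i < (l₁ ++ y :: (l₂ ++ r)).length)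
    (hne : i ≠ l₁.length) :
    (l₁ ++ x :: l₂)[i] = (l₁ ++ y :: (l₂ ++ r))[i] := by
  rcases Nat.lt_or_ge i l₁.length with h | h
  · rw [List.getElem_append_left h, List.getElem_append_left h]
  · have hgt : l₁.length < i := lt_of_le_of_ne h (Ne.symm hne)
    obtain ⟨k, rfl⟩ : ∃ k, i = l₁.length + 1 + k := ⟨i - l₁.length - 1, by omega⟩
    have hk : k < l₂.length := by simp at hi; omega
    rw [getElem_mid_right _ _ _ _ hi hk, getElem_mid_right _ _ _ _ hi' (by simp; omega)]
    rw [List.getElem_append_left hk]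

lemma sched_double {b : ℝ} (hb : 0 < b) (M : Multiset ℝ)
    (h : SchedulableR (b / 2 ::ₘ M)) : SchedulableR (b ::ₘ b ::ₘ M) := by
  classical
  obtain ⟨l, hl, f, hf⟩ := h
  have hcl : b / 2 ∈ l := by rw [← Multiset.mem_coe, hl]; exact Multiset.mem_cons_self _ _
  obtain ⟨l₁, l₂, rfl⟩ := List.append_of_mem hcl
  have hco : ((l₁ ++ b / 2 :: l₂ : List ℝ) : Multiset ℝ) = b / 2 ::ₘ ↑(l₁ ++ l₂) := by
    simpa using Multiset.coe_eq_coe.mpr (List.perm_middle (a := b/2) (l₁ := l₁) (l₂ := l₂))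
  have hM : M = ↑(l₁ ++ l₂) := by
    rw [hco] at hl
    exact ((Multiset.cons_inj_right _).mp hl.symm)
  refine ⟨l₁ ++ b :: (l₂ ++ [b]), ?_, ?_⟩
  · rw [hM]
    have h1 : ((l₁ ++ b :: (l₂ ++ [b]) : List ℝ) : Multiset ℝ) = b ::ₘ ↑(l₁ ++ (l₂ ++ [b])) := by
      simpa using Multiset.coe_eq_coe.mpr (List.perm_middle (a := b) (l₁ := l₁) (l₂ := l₂ ++ [b]))
    rw [h1]
    congr 1
    have h2 : (l₁ ++ (l₂ ++ [b])) = ((l₁ ++ l₂) ++ [b]) := by simp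
    rw [h2]
    simpa using Multiset.coe_eq_coe.mpr (List.perm_append_singleton b (l₁ ++ l₂))
  · have hlen : (l₁ ++ b :: (l₂ ++ [b])).length = (l₁ ++ b / 2 :: l₂).length + 1 := by
      simp; omega
    have hn₁ : l₁.length < (l₁ ++ b / 2 :: l₂).length := by simp
    have hnval : (l₁ ++ b / 2 :: l₂).length = l₁.length + 1 + l₂.length := by simp; omega
    set i₀ : Fin (l₁ ++ b / 2 :: l₂).length := ⟨l₁.length, hn₁⟩ with hi₀
    set N : ℕ → ℕ := fun u => ((Finset.range u).filter (fun s => f s = i₀)).card with hNdef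
    refine ⟨fun s => if f s = i₀ then
        (if Even (N s) then ⟨l₁.length, by omega⟩ else ⟨(l₁ ++ b / 2 :: l₂).length, by omega⟩)
      else ⟨(f s).val, by have := (f s).isLt; omega⟩, ?_⟩
    intro j t L
    have hgeti₀ : (l₁ ++ b / 2 :: l₂).get i₀ = b / 2 := by
      simp only [List.get_eq_getElem, hi₀]
      exact getElem_mid _ _ _ hn₁
    rcases eq_or_ne j.val l₁.length with hc1 | hc1
    · -- j is the "even" copy, period b
      have hget : (l₁ ++ b :: (l₂ ++ [b])).get j = b := by
        simp only [List.get_eq_getElem, hc1]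
        exact getElem_mid _ _ _ (by omega)
      rw [hget]
      have hfilt : (Finset.Ico t (t + L)).filter (fun s => (if f s = i₀ then
            (if Even (N s) then (⟨l₁.length, by omega⟩ : Fin (l₁ ++ b :: (l₂ ++ [b])).length)
              else ⟨(l₁ ++ b / 2 :: l₂).length, by omega⟩)
          else ⟨(f s).val, by have := (f s).isLt; omega⟩) = j)
          = ((Finset.Ico t (t + L)).filter (fun s => f s = i₀)).filter (fun s => Even (N s)) := by
        rw [Finset.filter_filter]
        apply Finset.filter_congr
        intro s _
        split_ifs with h1 h2
        · constructor
          · intro _; exact ⟨h1, h2⟩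
          · intro _; exact Fin.ext hc1.symm
        · constructor
          · intro hh; exact absurd (congrArg Fin.val hh) (by simp [hc1] <;> omega)
          · intro hh; exact absurd hh.2 h2
        · constructor
          · intro hh
            have hv := congrArg Fin.val hh
            simp only [hc1] at hv
            exact absurd (Fin.ext hv : f s = i₀) h1
          · intro hh; exact absurd hh.1 h1
      rw [hfilt]
      have hcount := hf i₀ t L
      rw [hgeti₀] at hcount
      have hpar := (occ_parity f i₀ t L).1
      set S := (Finset.Ico t (t + L)).filter (fun s => f s = i₀) with hS
      set m := ⌊(L : ℝ) / b⌋ with hm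
      have hdiv : (L : ℝ) / (b / 2) = 2 * ((L : ℝ) / b) := by
        field_simp
      have h2m : 2 * m ≤ ⌊(L : ℝ) / (b / 2)⌋ := by
        rw [hdiv]
        apply Int.le_floor.mpr
        push_cast
        have := Int.floor_le ((L : ℝ) / b)
        linarith
      have h1 : (2 * m : ℤ) ≤ (S.card : ℤ) := le_trans h2m hcount
      have hm0 : 0 ≤ m := Int.floor_nonneg.mpr (by positivity)
      have h2 : S.card / 2 ≤ (S.filter (fun s => Even (N s))).card := hpar
      omega
    rcases eq_or_ne j.val (l₁ ++ b / 2 :: l₂).length with hc2 | hc2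
    · -- j is the "odd" copy, period b
      have hget : (l₁ ++ b :: (l₂ ++ [b])).get j = b := by
        have hc2' : j.val = l₁.length + 1 + l₂.length := by omega
        simp only [List.get_eq_getElem, hc2']
        rw [getElem_mid_right _ _ _ _ (by omega) (by simp)]
        rw [List.getElem_append_right (le_refl _)]
        simp
      rw [hget]
      have hfilt : (Finset.Ico t (t + L)).filter (fun s => (if f s = i₀ then
            (if Even (N s) then (⟨l₁.length, by omega⟩ : Fin (l₁ ++ b :: (l₂ ++ [b])).length)
              else ⟨(l₁ ++ b / 2 :: l₂).length, by omega⟩)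
          else ⟨(f s).val, by have := (f s).isLt; omega⟩) = j)
          = ((Finset.Ico t (t + L)).filter (fun s => f s = i₀)).filter (fun s => ¬ Even (N s)) := by
        rw [Finset.filter_filter]
        apply Finset.filter_congr
        intro s _
        split_ifs with h1 h2
        · constructor
          · intro hh; exact absurd (congrArg Fin.val hh) (by simp [hc2] <;> omega)
          · intro hh; exact absurd h2 hh.2
        · constructor
          · intro _; exact ⟨h1, h2⟩
          · intro _; exact Fin.ext hc2.symm
        · constructor
          · intro hh
            have hv := congrArg Fin.val hh
            simp only [hc2] at hv
            have := (f s).isLt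
            omega
          · intro hh; exact absurd hh.1 h1
      rw [hfilt]
      have hcount := hf i₀ t L
      rw [hgeti₀] at hcount
      have hpar := (occ_parity f i₀ t L).2
      set S := (Finset.Ico t (t + L)).filter (fun s => f s = i₀) with hS
      set m := ⌊(L : ℝ) / b⌋ with hm
      have hdiv : (L : ℝ) / (b / 2) = 2 * ((L : ℝ) / b) := by
        field_simp
      have h2m : 2 * m ≤ ⌊(L : ℝ) / (b / 2)⌋ := by
        rw [hdiv]
        apply Int.le_floor.mpr
        push_cast
        have := Int.floor_le ((L : ℝ) / b)
        linarith
      have h1 : (2 * m : ℤ) ≤ (S.card : ℤ) := le_trans h2m hcount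
      have hm0 : 0 ≤ m := Int.floor_nonneg.mpr (by positivity)
      have h2 : S.card / 2 ≤ (S.filter (fun s => ¬ Even (N s))).card := hpar
      omega
    · -- ordinary index
      have hjlt : j.val < (l₁ ++ b / 2 :: l₂).length := by have := j.isLt; omega
      set j' : Fin (l₁ ++ b / 2 :: l₂).length := ⟨j.val, hjlt⟩ with hj'
      have hget : (l₁ ++ b :: (l₂ ++ [b])).get j = (l₁ ++ b / 2 :: l₂).get j' := by
        simp only [List.get_eq_getElem, hj']
        exact (getElem_swap_mid l₁ l₂ (b/2) b [b] j.val hjlt j.isLt hc1).symm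
      rw [hget]
      have hfilt : (Finset.Ico t (t + L)).filter (fun s => (if f s = i₀ then
            (if Even (N s) then (⟨l₁.length, by omega⟩ : Fin (l₁ ++ b :: (l₂ ++ [b])).length)
              else ⟨(l₁ ++ b / 2 :: l₂).length, by omega⟩)
          else ⟨(f s).val, by have := (f s).isLt; omega⟩) = j)
          = (Finset.Ico t (t + L)).filter (fun s => f s = j') := by
        apply Finset.filter_congr
        intro s _
        split_ifs with h1 h2
        · constructor
          · intro hh; exact absurd (congrArg Fin.val hh) (by simp; omega)
          · intro hh
            have hv := congrArg Fin.val (h1 ▸ hh : i₀ = j')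
            simp [hi₀, hj'] at hv
            omega
        · constructor
          · intro hh; exact absurd (congrArg Fin.val hh) (by simp; omega)
          · intro hh
            have hv := congrArg Fin.val (h1 ▸ hh : i₀ = j')
            simp [hi₀, hj'] at hv
            omega
        · constructor
          · intro hh
            have hv : (f s).val = j.val := congrArg Fin.val hh
            exact Fin.ext hv
          · intro hh
            have hv : (f s).val = j.val := congrArg Fin.val hh
            exact Fin.ext hv
      rw [hfilt]
      exact hf j' t L

theorem stmt_9 (θ : ℝ) (hθ : 0 < θ) (A B : Multiset ℝ) (hpos : ∀ x ∈ A, 0 < x)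
    (h : FoldRel θ A B) (hB : SchedulableR B) : SchedulableR A := by
  clear hpos
  revert hB
  induction h with
  | done A h => exact fun hB => hB
  | half A C a b haA hamax hbA hbmax hagt hbgt hrec ih =>
    intro hB
    have h1 := ih hB
    have hb0 : 0 < b := hθ.trans hbgt
    have hba : b ≤ a := hamax b (Multiset.mem_of_mem_erase hbA)
    have h2 := sched_double hb0 _ h1
    have h3 := sched_mono hb0 hba _ h2
    rw [Multiset.cons_erase hbA] at h3
    rwa [Multiset.cons_erase haA] at h3
  | cap A C a b haA hamax hbA hbmax hagt hble hrec ih =>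
    intro hB
    have h1 := ih hB
    have h2 := sched_mono hθ (le_of_lt hagt) _ h1
    rwa [Multiset.cons_erase haA] at h2
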